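/- arXiv:1910.09496 — 4 statements merged into one kernel-verified Lean document; each statement's English description precedes it below -/
import Mathlib

section
/- With the notation of the previous statement, if K' = K − 2η(R + Bᵀ P̃ B)^{-1}E with 0 ≤ η ≤ 1/2 (Gauss–Newton step), then Ψ(K') − Ψ(K) = (−4η + 4η²) Eᵀ(R + Bᵀ P̃ B)^{-1} E ⪯ −2η · Eᵀ(R + Bᵀ P̃ B)^{-1}E ⪯ 0. -/
open Matrix

lemma psd_smul {n : ℕ} {M : Matrix (Fin n) (Fin n) ℝ} (hM : M.PosSemidef) {c : ℝ}
    (hc : 0 ≤ c) : (c • M).PosSemidef := by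
  refine ⟨by unfold Matrix.IsHermitian; rw [conjTranspose_smul, hM.1]; simp, fun x => ?_⟩
  exact (hM.smul hc).2 x

lemma key_expand {m d l : ℕ}
    (A : Matrix (Fin m) (Fin m) ℝ) (B : Matrix (Fin m) (Fin d) ℝ)
    (C : Matrix (Fin l) (Fin m) ℝ)
    (R : Matrix (Fin d) (Fin d) ℝ) (Pt : Matrix (Fin m) (Fin m) ℝ)
    (hRH : Rᵀ = R) (hPtH : Ptᵀ = Pt)
    (K D : Matrix (Fin d) (Fin m) ℝ) :
    (Cᵀ * C + (K + D)ᵀ * R * (K + D) + (A - B * (K + D))ᵀ * Pt * (A - B * (K + D)))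
      - (Cᵀ * C + Kᵀ * R * K + (A - B * K)ᵀ * Pt * (A - B * K))
    = Dᵀ * (R + Bᵀ * Pt * B) * D
      + Dᵀ * ((R + Bᵀ * Pt * B) * K - Bᵀ * Pt * A)
      + ((R + Bᵀ * Pt * B) * K - Bᵀ * Pt * A)ᵀ * D := by
  simp only [transpose_add, transpose_sub, transpose_mul, hRH, hPtH, transpose_transpose,
    Matrix.add_mul, Matrix.mul_add, Matrix.sub_mul, Matrix.mul_sub, Matrix.mul_assoc]
  abel

/-- One Gauss–Newton step decreases the Riccati right-hand side:
with `K' = K − 2η(R + BᵀP̃B)⁻¹E` and `0 ≤ η ≤ 1/2`,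
`Ψ(K') − Ψ(K) = (−4η + 4η²) Eᵀ(R + BᵀP̃B)⁻¹E ⪯ −2η Eᵀ(R + BᵀP̃B)⁻¹E ⪯ 0`. -/
theorem gauss_newton_step_decrease {m d l : ℕ}
    (A : Matrix (Fin m) (Fin m) ℝ) (B : Matrix (Fin m) (Fin d) ℝ)
    (C : Matrix (Fin l) (Fin m) ℝ)
    (R : Matrix (Fin d) (Fin d) ℝ) (Pt : Matrix (Fin m) (Fin m) ℝ)
    (hR : R.PosDef) (hPt : Pt.PosSemidef)
    (K : Matrix (Fin d) (Fin m) ℝ) (η : ℝ) (hη0 : 0 ≤ η) (hη : η ≤ 1 / 2)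
    (E : Matrix (Fin d) (Fin m) ℝ) (hE : E = (R + Bᵀ * Pt * B) * K - Bᵀ * Pt * A)
    (K' : Matrix (Fin d) (Fin m) ℝ)
    (hK' : K' = K - (2 * η) • ((R + Bᵀ * Pt * B)⁻¹ * E))
    (Ψ : Matrix (Fin d) (Fin m) ℝ → Matrix (Fin m) (Fin m) ℝ)
    (hΨ : ∀ L, Ψ L = Cᵀ * C + Lᵀ * R * L + (A - B * L)ᵀ * Pt * (A - B * L)) :
    Ψ K' - Ψ K = (-4 * η + 4 * η ^ 2) • (Eᵀ * (R + Bᵀ * Pt * B)⁻¹ * E) ∧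
    ((-2 * η) • (Eᵀ * (R + Bᵀ * Pt * B)⁻¹ * E) - (Ψ K' - Ψ K)).PosSemidef ∧
    (-(Ψ K' - Ψ K)).PosSemidef := by
  have hRT : Rᵀ = R := by
    rw [← conjTranspose_eq_transpose_of_trivial]; exact hR.isHermitian
  have hPtT : Ptᵀ = Pt := by
    rw [← conjTranspose_eq_transpose_of_trivial]; exact hPt.isHermitian
  have hBPB : (Bᵀ * Pt * B).PosSemidef := by
    simpa using hPt.conjTranspose_mul_mul_same B
  have hS : (R + Bᵀ * Pt * B).PosDef := hR.add_posSemidef hBPB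
  have hinv : (R + Bᵀ * Pt * B)⁻¹.PosDef := hS.inv
  have hinvT : ((R + Bᵀ * Pt * B)⁻¹)ᵀ = (R + Bᵀ * Pt * B)⁻¹ := by
    rw [← conjTranspose_eq_transpose_of_trivial]; exact hinv.isHermitian
  set S := R + Bᵀ * Pt * B with hSdef
  have hcancel : S * (S⁻¹ * E) = E := by
    rw [← Matrix.mul_assoc, Matrix.mul_nonsing_inv _ hS.det_pos.ne'.isUnit, Matrix.one_mul]
  have hD : K' = K + (-(2*η)) • (S⁻¹ * E) := by
    rw [hK', sub_eq_add_neg, ← neg_smul]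
  have hM : (Eᵀ * S⁻¹ * E).PosSemidef := by
    simpa using hinv.posSemidef.conjTranspose_mul_mul_same E
  have main : Ψ K' - Ψ K = (-4 * η + 4 * η ^ 2) • (Eᵀ * S⁻¹ * E) := by
    rw [hΨ, hΨ, hD, key_expand A B C R Pt hRT hPtT K _]
    simp only [← hSdef, ← hE]
    simp only [transpose_smul, transpose_mul, hinvT, Matrix.smul_mul, Matrix.mul_smul,
      smul_smul, Matrix.mul_assoc, hcancel]
    module
  refine ⟨main, ?_, ?_⟩
  · rw [main, ← sub_smul]
    exact psd_smul hM (by nlinarith)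
  · rw [main, ← neg_smul]
    exact psd_smul hM (by nlinarith)
end

section
/- With E = (R + Bᵀ P̃ B)K − Bᵀ P̃ A and Ψ as above, if K' = K − 2ηE (natural policy gradient step) with 0 ≤ η ≤ 1/(2‖R + Bᵀ P̃ B‖), then Ψ(K') − Ψ(K) ⪯ −2η EᵀE ⪯ 0. -/
open Matrix

lemma dot_mulVec_le_opNorm {n : ℕ} (M : Matrix (Fin n) (Fin n) ℝ) (x : Fin n → ℝ) :
    x ⬝ᵥ (M *ᵥ x) ≤ ‖Matrix.toEuclideanCLM (𝕜 := ℝ) M‖ * (x ⬝ᵥ x) := by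
  set T := Matrix.toEuclideanCLM (𝕜 := ℝ) M with hT
  set y : EuclideanSpace ℝ (Fin n) := (WithLp.equiv 2 _).symm x with hy
  have h0 : x ⬝ᵥ (M *ᵥ x) = inner ℝ y (T y) := by
    rw [hy, hT, WithLp.equiv_symm_apply, Matrix.toEuclideanCLM_toLp,
      EuclideanSpace.inner_toLp_toLp]
    simp [dotProduct, mul_comm]
  have h1 : x ⬝ᵥ x = ‖y‖ ^ 2 := by
    rw [← real_inner_self_eq_norm_sq, hy, WithLp.equiv_symm_apply, EuclideanSpace.inner_toLp_toLp]
    simp [dotProduct]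
  have h2 : inner ℝ y (T y) ≤ ‖y‖ * ‖T y‖ := real_inner_le_norm y (T y)
  have h3 : ‖T y‖ ≤ ‖T‖ * ‖y‖ := T.le_opNorm y
  have h4 : (0:ℝ) ≤ ‖y‖ := norm_nonneg y
  rw [h0, h1]
  nlinarith [norm_nonneg (T y)]

/-- One natural policy gradient step decreases the Riccati right-hand side:
with `K' = K − 2ηE` and `0 ≤ η ≤ 1/(2‖R + BᵀP̃B‖)`,
`Ψ(K') − Ψ(K) ⪯ −2η EᵀE ⪯ 0`. -/
theorem natural_pg_step_decrease {m d l : ℕ}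
    (A : Matrix (Fin m) (Fin m) ℝ) (B : Matrix (Fin m) (Fin d) ℝ)
    (C : Matrix (Fin l) (Fin m) ℝ)
    (R : Matrix (Fin d) (Fin d) ℝ) (Pt : Matrix (Fin m) (Fin m) ℝ)
    (hR : R.PosDef) (hPt : Pt.PosSemidef)
    (K : Matrix (Fin d) (Fin m) ℝ) (η : ℝ) (hη0 : 0 ≤ η)
    (hη : η ≤ 1 / (2 * ‖Matrix.toEuclideanCLM (𝕜 := ℝ) (R + Bᵀ * Pt * B)‖))
    (E : Matrix (Fin d) (Fin m) ℝ) (hE : E = (R + Bᵀ * Pt * B) * K - Bᵀ * Pt * A)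
    (K' : Matrix (Fin d) (Fin m) ℝ) (hK' : K' = K - (2 * η) • E)
    (Ψ : Matrix (Fin d) (Fin m) ℝ → Matrix (Fin m) (Fin m) ℝ)
    (hΨ : ∀ L, Ψ L = Cᵀ * C + Lᵀ * R * L + (A - B * L)ᵀ * Pt * (A - B * L)) :
    ((-2 * η) • (Eᵀ * E) - (Ψ K' - Ψ K)).PosSemidef ∧
    (-((-2 * η) • (Eᵀ * E))).PosSemidef := by
  have hRt : Rᵀ = R := by
    rw [← Matrix.conjTranspose_eq_transpose_of_trivial]; exact hR.1
  have hPtt : Ptᵀ = Pt := by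
    rw [← Matrix.conjTranspose_eq_transpose_of_trivial]; exact hPt.1
  set c : ℝ := ‖Matrix.toEuclideanCLM (𝕜 := ℝ) (R + Bᵀ * Pt * B)‖ with hc
  have hc0 : 0 ≤ c := norm_nonneg _
  have h2ηc : 2 * η * c ≤ 1 := by
    rcases hc0.eq_or_lt with h | h
    · rw [← h]; simp
    · have := (le_div_iff₀ (by positivity : (0:ℝ) < 2 * c)).mp hη
      nlinarith
  -- key algebraic identity
  have key : Ψ K' - Ψ K
      = (4 * η ^ 2) • (Eᵀ * (R + Bᵀ * Pt * B) * E) - (4 * η) • (Eᵀ * E) := by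
    subst hK' hE
    rw [hΨ, hΨ]
    simp only [Matrix.transpose_add, Matrix.transpose_sub, Matrix.transpose_smul,
      Matrix.transpose_mul, Matrix.transpose_transpose, Matrix.add_mul, Matrix.sub_mul,
      Matrix.mul_add, Matrix.mul_sub, Matrix.smul_mul, Matrix.mul_smul, smul_smul,
      smul_sub, smul_add, Matrix.mul_assoc, hRt, hPtt]
    module
  -- the middle matrix
  set N : Matrix (Fin d) (Fin d) ℝ :=
    (2 * η) • (1 : Matrix (Fin d) (Fin d) ℝ) - (4 * η ^ 2) • (R + Bᵀ * Pt * B) with hN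
  have key2 : (-2 * η) • (Eᵀ * E) - (Ψ K' - Ψ K) = Eᵀ * N * E := by
    rw [key, hN]
    simp only [Matrix.sub_mul, Matrix.mul_sub, Matrix.smul_mul, Matrix.mul_smul,
      Matrix.mul_one, Matrix.one_mul, Matrix.mul_assoc]
    module
  have hMher : (R + Bᵀ * Pt * B).IsHermitian := by
    rw [Matrix.IsHermitian, Matrix.conjTranspose_eq_transpose_of_trivial]
    simp [Matrix.transpose_add, Matrix.transpose_mul, hRt, hPtt, Matrix.mul_assoc]
  have hNpsd : N.PosSemidef := by
    refine Matrix.PosSemidef.of_dotProduct_mulVec_nonneg ?_ ?_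
    · rw [Matrix.IsHermitian, Matrix.conjTranspose_eq_transpose_of_trivial, hN]
      have := hMher
      rw [Matrix.IsHermitian, Matrix.conjTranspose_eq_transpose_of_trivial] at this
      simp [Matrix.transpose_sub, Matrix.transpose_smul, Matrix.transpose_add,
        Matrix.transpose_mul, Matrix.mul_assoc, hRt, hPtt]
    · intro x
      have hxx : 0 ≤ x ⬝ᵥ x :=
        Finset.sum_nonneg fun i _ => mul_self_nonneg (x i)
      have hb := dot_mulVec_le_opNorm (R + Bᵀ * Pt * B) x
      rw [← hc] at hb
      have hval : (star x) ⬝ᵥ (N *ᵥ x)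
          = (2 * η) * (x ⬝ᵥ x) - (4 * η ^ 2) * (x ⬝ᵥ ((R + Bᵀ * Pt * B) *ᵥ x)) := by
        rw [hN]
        simp [Matrix.sub_mulVec, Matrix.add_mulVec, Matrix.smul_mulVec,
          Matrix.one_mulVec, dotProduct_sub, dotProduct_add,
          dotProduct_smul, star_trivial, smul_eq_mul]
        ring
      rw [hval]
      nlinarith [mul_nonneg (mul_nonneg hη0 hη0) (sub_nonneg.mpr hb),
        mul_nonneg (mul_nonneg hη0 hxx) (sub_nonneg.mpr h2ηc)]
  constructor
  · rw [key2]
    have := hNpsd.conjTranspose_mul_mul_same E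
    rwa [Matrix.conjTranspose_eq_transpose_of_trivial] at this
  · have h : -((-2 * η) • (Eᵀ * E)) = (2 * η) • (Eᵀ * E) := by module
    rw [h]
    have base : (Eᵀ * E).PosSemidef := by
      have := Matrix.posSemidef_conjTranspose_mul_self E
      rwa [Matrix.conjTranspose_eq_transpose_of_trivial] at this
    refine Matrix.PosSemidef.of_dotProduct_mulVec_nonneg ?_ ?_
    · rw [Matrix.IsHermitian, Matrix.conjTranspose_eq_transpose_of_trivial]
      have := base.1
      rw [Matrix.IsHermitian, Matrix.conjTranspose_eq_transpose_of_trivial] at this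
      simp [Matrix.transpose_smul, this]
    · intro x
      have := base.dotProduct_mulVec_nonneg x
      simp only [Matrix.smul_mulVec, dotProduct_smul, smul_eq_mul]
      have h2η : (0:ℝ) ≤ 2 * η := by linarith
      simpa using mul_nonneg h2η (by simpa using this)
end

section
/- Let P, P' be symmetric m×m matrices, D an m×n matrix, γ > 0 with both γ²I − DᵀPD ≻ 0 and γ²I − DᵀP'D ≻ 0. Then (I − γ^{-2}P'DDᵀ)^{-1}(P − γ^{-2}P'DDᵀP')(I − γ^{-2}DDᵀP')^{-1} ⪯ P̃, where P̃ = (I − γ^{-2}PDDᵀ)^{-1}P. -/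
open Matrix

/-- Key comparison used in the discrete-time cost-difference lemma (Lemma B.1):
`(I − γ⁻²P'DDᵀ)⁻¹ (P − γ⁻²P'DDᵀP') (I − γ⁻²DDᵀP')⁻¹ ⪯ P̃ = (I − γ⁻²PDDᵀ)⁻¹P`. -/
theorem cost_difference_comparison {m n : ℕ}
    (P P' : Matrix (Fin m) (Fin m) ℝ) (D : Matrix (Fin m) (Fin n) ℝ) (γ : ℝ)
    (hγ : 0 < γ) (hP : P.IsSymm) (hP' : P'.IsSymm)
    (hpd : (γ ^ 2 • (1 : Matrix (Fin n) (Fin n) ℝ) - Dᵀ * P * D).PosDef)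
    (hpd' : (γ ^ 2 • (1 : Matrix (Fin n) (Fin n) ℝ) - Dᵀ * P' * D).PosDef) :
    ((1 - γ⁻¹ ^ 2 • (P * D * Dᵀ))⁻¹ * P
      - (1 - γ⁻¹ ^ 2 • (P' * D * Dᵀ))⁻¹
          * (P - γ⁻¹ ^ 2 • (P' * D * Dᵀ * P'))
          * (1 - γ⁻¹ ^ 2 • (D * Dᵀ * P'))⁻¹).PosSemidef := by
  have hγ0 : γ ≠ 0 := hγ.ne'
  set ε : ℝ := γ⁻¹ ^ 2 with hεdef
  have hε0 : ε ≠ 0 := pow_ne_zero 2 (inv_ne_zero hγ0)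
  have hεγ : ε * γ ^ 2 = 1 := by
    rw [hεdef, ← mul_pow, inv_mul_cancel₀ hγ0, one_pow]
  set S : Matrix (Fin n) (Fin n) ℝ := γ ^ 2 • (1 : Matrix (Fin n) (Fin n) ℝ) - Dᵀ * P * D
    with hSdef
  set S' : Matrix (Fin n) (Fin n) ℝ := γ ^ 2 • (1 : Matrix (Fin n) (Fin n) ℝ) - Dᵀ * P' * D
    with hS'def
  have hSdet : IsUnit S.det := (Matrix.isUnit_iff_isUnit_det S).mp hpd.isUnit
  have hS'det : IsUnit S'.det := (Matrix.isUnit_iff_isUnit_det S').mp hpd'.isUnit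
  -- the scalar-matrix identities
  have hεS : (1 : Matrix (Fin n) (Fin n) ℝ) - ε • (Dᵀ * (P * D)) = ε • S := by
    rw [hSdef, smul_sub, smul_smul, hεγ, one_smul, Matrix.mul_assoc]
  have hεS' : (1 : Matrix (Fin n) (Fin n) ℝ) - ε • (Dᵀ * (P' * D)) = ε • S' := by
    rw [hS'def, smul_sub, smul_smul, hεγ, one_smul, Matrix.mul_assoc]
  -- determinants of the three I - ε • ... matrices
  have hdetscal : ∀ (T : Matrix (Fin n) (Fin n) ℝ), IsUnit T.det → IsUnit (ε • T).det := by
    intro T hT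
    rw [Matrix.det_smul]
    exact (IsUnit.pow _ (isUnit_iff_ne_zero.mpr hε0)).mul hT
  have hdA : IsUnit ((1 : Matrix (Fin m) (Fin m) ℝ) - ε • (P * D * Dᵀ)).det := by
    have e1 : (1 : Matrix (Fin m) (Fin m) ℝ) - ε • (P * D * Dᵀ) = 1 - (P * D) * (ε • Dᵀ) := by
      rw [Matrix.mul_smul]
    rw [e1, Matrix.det_one_sub_mul_comm, Matrix.smul_mul, hεS]
    exact hdetscal S hSdet
  have hdA' : IsUnit ((1 : Matrix (Fin m) (Fin m) ℝ) - ε • (P' * D * Dᵀ)).det := by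
    have e1 : (1 : Matrix (Fin m) (Fin m) ℝ) - ε • (P' * D * Dᵀ) = 1 - (P' * D) * (ε • Dᵀ) := by
      rw [Matrix.mul_smul]
    rw [e1, Matrix.det_one_sub_mul_comm, Matrix.smul_mul, hεS']
    exact hdetscal S' hS'det
  have hdB' : IsUnit ((1 : Matrix (Fin m) (Fin m) ℝ) - ε • (D * Dᵀ * P')).det := by
    have e1 : (1 : Matrix (Fin m) (Fin m) ℝ) - ε • (D * Dᵀ * P') = 1 - D * (ε • (Dᵀ * P')) := by
      rw [Matrix.mul_smul, Matrix.mul_assoc]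
    rw [e1, Matrix.det_one_sub_mul_comm, Matrix.smul_mul, Matrix.mul_assoc Dᵀ P' D, hεS']
    exact hdetscal S' hS'det
  -- key relations for R := S⁻¹
  have hSR : S * S⁻¹ = 1 := Matrix.mul_nonsing_inv S hSdet
  have hRS : S⁻¹ * S = 1 := Matrix.nonsing_inv_mul S hSdet
  have hDPDR : Dᵀ * P * D * S⁻¹ = γ ^ 2 • S⁻¹ - 1 := by
    rw [hSdef, Matrix.sub_mul, Matrix.smul_mul, Matrix.one_mul] at hSR
    exact eq_sub_of_add_eq (by rw [← hSR]; abel)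
  have hRDPD : S⁻¹ * (Dᵀ * P * D) = γ ^ 2 • S⁻¹ - 1 := by
    rw [hSdef, Matrix.mul_sub, Matrix.mul_smul, Matrix.mul_one] at hRS
    exact eq_sub_of_add_eq (by rw [← hRS]; abel)
  have hA1 : ∀ (X : Matrix (Fin n) (Fin m) ℝ),
      Dᵀ * (P * (D * (S⁻¹ * X))) = γ ^ 2 • (S⁻¹ * X) - X := by
    intro X
    calc Dᵀ * (P * (D * (S⁻¹ * X))) = (Dᵀ * P * D * S⁻¹) * X := by
          simp only [Matrix.mul_assoc]
      _ = (γ ^ 2 • S⁻¹ - 1) * X := by rw [hDPDR]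
      _ = γ ^ 2 • (S⁻¹ * X) - X := by
          rw [Matrix.sub_mul, Matrix.smul_mul, Matrix.one_mul]
  have hA2 : ∀ (X : Matrix (Fin n) (Fin m) ℝ),
      S⁻¹ * (Dᵀ * (P * (D * X))) = γ ^ 2 • (S⁻¹ * X) - X := by
    intro X
    calc S⁻¹ * (Dᵀ * (P * (D * X))) = (S⁻¹ * (Dᵀ * P * D)) * X := by
          simp only [Matrix.mul_assoc]
      _ = (γ ^ 2 • S⁻¹ - 1) * X := by rw [hRDPD]
      _ = γ ^ 2 • (S⁻¹ * X) - X := by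
          rw [Matrix.sub_mul, Matrix.smul_mul, Matrix.one_mul]
  -- the resolvent identity for P
  have hkey : (1 - ε • (P * D * Dᵀ)) * (P + P * D * S⁻¹ * Dᵀ * P) = P := by
    simp only [Matrix.mul_add, Matrix.add_mul, Matrix.sub_mul, Matrix.mul_sub, Matrix.smul_mul,
      Matrix.mul_smul, Matrix.mul_assoc, Matrix.one_mul, smul_sub, smul_add, smul_smul]
    rw [hA1 (Dᵀ * P)]
    simp only [Matrix.mul_sub, Matrix.mul_smul, smul_sub, smul_smul, hεγ, one_smul]
    abel
  have hg : (1 - ε • (P * D * Dᵀ))⁻¹ * P = P + P * D * S⁻¹ * Dᵀ * P := by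
    have h := congrArg (fun X => (1 - ε • (P * D * Dᵀ))⁻¹ * X) hkey
    simpa only [← Matrix.mul_assoc, Matrix.nonsing_inv_mul _ hdA, Matrix.one_mul] using h.symm
  -- the main algebraic identity
  have hmain : (1 - ε • (P' * D * Dᵀ)) * (P + P * D * S⁻¹ * Dᵀ * P) * (1 - ε • (D * Dᵀ * P'))
      = (P - ε • (P' * D * Dᵀ * P')) + (P - P') * D * S⁻¹ * Dᵀ * (P - P') := by
    simp only [Matrix.mul_add, Matrix.add_mul, Matrix.sub_mul, Matrix.mul_sub, Matrix.smul_mul,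
      Matrix.mul_smul, Matrix.mul_assoc, Matrix.one_mul, Matrix.mul_one, smul_sub, smul_add,
      smul_smul, hA1, hA2]
    simp only [Matrix.mul_sub, Matrix.mul_smul, Matrix.sub_mul, Matrix.smul_mul, smul_sub,
      smul_smul, mul_one, one_mul, hεγ, one_smul]
    abel
  set A' : Matrix (Fin m) (Fin m) ℝ := 1 - ε • (P' * D * Dᵀ) with hA'def
  set B' : Matrix (Fin m) (Fin m) ℝ := 1 - ε • (D * Dᵀ * P') with hB'def
  set W : Matrix (Fin m) (Fin m) ℝ := (P - P') * D * S⁻¹ * Dᵀ * (P - P') with hWdef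
  have hx : ∀ (X : Matrix (Fin m) (Fin m) ℝ), A'⁻¹ * (A' * X * B') * B'⁻¹ = X := by
    intro X
    rw [Matrix.mul_assoc A' X B', ← Matrix.mul_assoc A'⁻¹ A' (X * B'),
      Matrix.nonsing_inv_mul _ hdA', Matrix.one_mul, Matrix.mul_assoc X B' B'⁻¹,
      Matrix.mul_nonsing_inv _ hdB', Matrix.mul_one]
  have hT : (1 - ε • (P * D * Dᵀ))⁻¹ * P
      - A'⁻¹ * (P - ε • (P' * D * Dᵀ * P')) * B'⁻¹ = A'⁻¹ * W * B'⁻¹ := by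
    rw [hg, ← hx (P + P * D * S⁻¹ * Dᵀ * P), hmain]
    simp only [Matrix.mul_add, Matrix.add_mul]
    abel
  rw [hT]
  -- transpose structure
  have hBT : B' = A'ᵀ := by
    rw [hA'def, hB'def, Matrix.transpose_sub, Matrix.transpose_one, Matrix.transpose_smul,
      Matrix.transpose_mul, Matrix.transpose_mul, Matrix.transpose_transpose, hP'.eq,
      Matrix.mul_assoc]
  have hBinv : B'⁻¹ = (A'⁻¹)ᵀ := by rw [hBT, ← Matrix.transpose_nonsing_inv]
  have hL : A'⁻¹ * W * B'⁻¹
      = (A'⁻¹ * (P - P') * D) * S⁻¹ * (A'⁻¹ * (P - P') * D)ᴴ := by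
    rw [Matrix.conjTranspose_eq_transpose_of_trivial, Matrix.transpose_mul, Matrix.transpose_mul,
      Matrix.transpose_sub, hP.eq, hP'.eq, hBinv, hWdef]
    simp only [Matrix.mul_assoc]
  rw [hL]
  exact (hpd.inv.posSemidef).mul_mul_conjTranspose_same _
end

section
/- Let P ≻ 0, W ≻ 0 be symmetric with W^{-1} − βP ≻ 0 for some β > 0. Then P + βP(W^{-1} − βP)^{-1}P = (P^{-1} − βW)^{-1} = (I − βPW)^{-1}P, and this expression is matrix-monotone in P: if 0 ≺ P₁ ⪯ P₂ with W^{-1} − βP₂ ≻ 0, then (P₁^{-1} − βW)^{-1} ⪯ (P₂^{-1} − βW)^{-1}. -/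
open Matrix

private lemma psd_smul_s19 {m : ℕ} {β : ℝ} (hβ : 0 ≤ β) {A : Matrix (Fin m) (Fin m) ℝ}
    (hA : A.PosSemidef) : (β • A).PosSemidef := by
  refine posSemidef_iff_dotProduct_mulVec.mpr ⟨?_, fun x => ?_⟩
  · unfold Matrix.IsHermitian
    rw [conjTranspose_smul, hA.1]
    simp
  · rw [smul_mulVec, dotProduct_smul]
    exact mul_nonneg hβ (hA.dotProduct_mulVec_nonneg x)

/-- Loewner inverse antitonicity via Schur complements. -/
private lemma inv_antitone {m : ℕ} {A B : Matrix (Fin m) (Fin m) ℝ}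
    (hA : A.PosDef) (hB : B.PosDef) (h : (B - A).PosSemidef) :
    (A⁻¹ - B⁻¹).PosSemidef := by
  haveI := hB.isUnit.invertible
  haveI := hA.inv.isUnit.invertible
  have h₂ := (Matrix.PosDef.fromBlocks₂₂ B (1 : Matrix (Fin m) (Fin m) ℝ) hA.inv).mpr
  have h₁ := (Matrix.PosDef.fromBlocks₁₁ (1 : Matrix (Fin m) (Fin m) ℝ) A⁻¹ hB).mp
  have key : (fromBlocks B 1 (1 : Matrix (Fin m) (Fin m) ℝ)ᴴ A⁻¹).PosSemidef := by
    apply h₂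
    have : B - 1 * (A⁻¹)⁻¹ * (1 : Matrix (Fin m) (Fin m) ℝ)ᴴ = B - A := by
      simp [Matrix.nonsing_inv_nonsing_inv A ((Matrix.isUnit_iff_isUnit_det A).mp hA.isUnit)]
    rw [this]
    exact h
  have := h₁ key
  simpa using this

private lemma key_identity {m : ℕ} {β : ℝ} (hβ : 0 < β)
    {W P : Matrix (Fin m) (Fin m) ℝ} (hW : W.PosDef) (hP : P.PosDef)
    (hcond : (W⁻¹ - β • P).PosDef) :
    P + β • (P * (W⁻¹ - β • P)⁻¹ * P) = (P⁻¹ - β • W)⁻¹ ∧ (P⁻¹ - β • W).PosDef := by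
  set S : Matrix (Fin m) (Fin m) ℝ := W⁻¹ - β • P with hS
  set M : Matrix (Fin m) (Fin m) ℝ := S⁻¹ with hM
  have hPdet := (Matrix.isUnit_iff_isUnit_det P).mp hP.isUnit
  have hWdet := (Matrix.isUnit_iff_isUnit_det W).mp hW.isUnit
  have hSdet := (Matrix.isUnit_iff_isUnit_det S).mp hcond.isUnit
  have hMS : M * S = 1 := Matrix.nonsing_inv_mul S hSdet
  have hSM : S * M = 1 := Matrix.mul_nonsing_inv S hSdet
  have hPinv : P⁻¹ * P = 1 := Matrix.nonsing_inv_mul P hPdet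
  have hWW : W * W⁻¹ = 1 := Matrix.mul_nonsing_inv W hWdet
  set Q : Matrix (Fin m) (Fin m) ℝ := P + β • (P * M * P) with hQ
  have hQ_eq : Q = P * M * W⁻¹ := by
    have : W⁻¹ = S + β • P := by rw [hS]; abel
    rw [this, hQ]
    rw [Matrix.mul_add, Matrix.mul_assoc P M S]
    rw [hMS]
    simp [Matrix.mul_smul, Matrix.mul_assoc]
  have hfact : (P⁻¹ - β • W) * P = W * S := by
    rw [Matrix.sub_mul, hPinv, Matrix.smul_mul, hS, Matrix.mul_sub, hWW, Matrix.mul_smul]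
  have hleft : (P⁻¹ - β • W) * Q = 1 := by
    rw [hQ_eq, ← Matrix.mul_assoc, ← Matrix.mul_assoc, hfact, Matrix.mul_assoc W S M, hSM,
      Matrix.mul_one, hWW]
  have hQpos : Q.PosDef := by
    apply hP.add_posSemidef
    apply psd_smul_s19 hβ.le
    have hPMPpsd : (P * M * P).PosSemidef := by
      have := hcond.inv.posSemidef.mul_mul_conjTranspose_same P
      rwa [hP.isHermitian.eq] at this
    exact hPMPpsd
  constructor
  · exact (Matrix.inv_eq_right_inv hleft).symm
  · have : P⁻¹ - β • W = Q⁻¹ := (Matrix.inv_eq_left_inv hleft).symm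
    rw [this]
    exact hQpos.inv

/-- Reformulation and monotonicity of the LEQG 'twisted' matrix:
`P + βP(W⁻¹ − βP)⁻¹P = (P⁻¹ − βW)⁻¹ = (I − βPW)⁻¹P`, and this expression is matrix-monotone
in `P`. -/
theorem leqg_twisted_matrix_identity_and_monotone {m : ℕ}
    (β : ℝ) (hβ : 0 < β) (W : Matrix (Fin m) (Fin m) ℝ) (hW : W.PosDef)
    (P : Matrix (Fin m) (Fin m) ℝ) (hP : P.PosDef)
    (hcond : (W⁻¹ - β • P).PosDef) :
    P + β • (P * (W⁻¹ - β • P)⁻¹ * P) = (P⁻¹ - β • W)⁻¹ ∧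
    (P⁻¹ - β • W)⁻¹ = (1 - β • (P * W))⁻¹ * P ∧
    ∀ P₁ P₂ : Matrix (Fin m) (Fin m) ℝ, P₁.PosDef → P₂.PosDef →
      (P₂ - P₁).PosSemidef → (W⁻¹ - β • P₂).PosDef →
      ((P₂⁻¹ - β • W)⁻¹ - (P₁⁻¹ - β • W)⁻¹).PosSemidef := by
  obtain ⟨h1, hpos⟩ := key_identity hβ hW hP hcond
  have hPdet := (Matrix.isUnit_iff_isUnit_det P).mp hP.isUnit
  refine ⟨h1, ?_, ?_⟩
  · have hfac : P⁻¹ - β • W = P⁻¹ * (1 - β • (P * W)) := by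
      rw [Matrix.mul_sub, Matrix.mul_one, Matrix.mul_smul, ← Matrix.mul_assoc,
        Matrix.nonsing_inv_mul P hPdet, Matrix.one_mul]
    rw [hfac, Matrix.mul_inv_rev, Matrix.nonsing_inv_nonsing_inv P hPdet]
  · intro P₁ P₂ hP₁ hP₂ hle hcond₂
    have hcond₁ : (W⁻¹ - β • P₁).PosDef := by
      have : W⁻¹ - β • P₁ = (W⁻¹ - β • P₂) + β • (P₂ - P₁) := by
        rw [smul_sub]; abel
      rw [this]
      exact hcond₂.add_posSemidef (psd_smul_s19 hβ.le hle)
    obtain ⟨_, hpos₁⟩ := key_identity hβ hW hP₁ hcond₁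
    obtain ⟨_, hpos₂⟩ := key_identity hβ hW hP₂ hcond₂
    have hinv12 : (P₁⁻¹ - P₂⁻¹).PosSemidef := inv_antitone hP₁ hP₂ hle
    have hsub : ((P₁⁻¹ - β • W) - (P₂⁻¹ - β • W)).PosSemidef := by
      have : (P₁⁻¹ - β • W) - (P₂⁻¹ - β • W) = P₁⁻¹ - P₂⁻¹ := by abel
      rw [this]; exact hinv12
    exact inv_antitone hpos₂ hpos₁ hsub
end
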